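/- For a natural number n, the subgroup lattice of the alternating group Aₙ is dismantlable if and only if n ≤ 4. -/

import Mathlib

/-- A finite lattice `L` with `n` elements is *dismantlable* if there is a chain
`L₁ ⊆ L₂ ⊆ ... ⊆ Lₙ = L` of sublattices of `L` with `|Lᵢ| = i` for `i = 1, ..., n`. -/
def Dismantlable (L : Type*) [Lattice L] [Finite L] : Prop :=
  ∃ c : ℕ → Set L,
    (∀ i, 1 ≤ i → i ≤ Nat.card L → IsSublattice (c i) ∧ Nat.card (c i) = i) ∧
    (∀ i, 1 ≤ i → i < Nat.card L → c i ⊆ c (i + 1)) ∧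
    c (Nat.card L) = Set.univ

/-- `x 0, y 0, x 1, y 1, ..., x (n-1), y (n-1)` form a *crown of order `2n`* (for `n ≥ 3`)
in a poset: the `2n` elements are pairwise distinct, and the only comparability relations
among them are `x i ≤ y i` and `x (i+1) ≤ y i` (indices mod `n`). -/
def IsCrown {P : Type*} [PartialOrder P] {n : ℕ} (x y : Fin n → P) : Prop :=
  3 ≤ n ∧ Function.Injective x ∧ Function.Injective y ∧
  (∀ i j, x i ≠ y j) ∧
  (∀ i j, x i ≤ x j → i = j) ∧
  (∀ i j, y i ≤ y j → i = j) ∧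
  (∀ i j, ¬ y i ≤ x j) ∧
  (∀ i j, x i ≤ y j ↔ (i = j ∨ (i : ℕ) = ((j : ℕ) + 1) % n))

section FinArith
variable {m : ℕ}

lemma fin_mod2 (a : ℕ) (h1 : a < 2 * m) (h2 : 0 < m) :
    a % m = if a < m then a else a - m := by
  split_ifs with h
  · exact Nat.mod_eq_of_lt h
  · rw [Nat.mod_eq_sub_mod (le_of_not_gt h), Nat.mod_eq_of_lt (by omega)]

lemma fin_val_one [NeZero m] (hm : 3 ≤ m) : ((1 : Fin m) : ℕ) = 1 := by
  rw [Fin.val_one']; exact Nat.mod_eq_of_lt (by omega)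

lemma fin_val_add_one [NeZero m] (hm : 3 ≤ m) (j : Fin m) :
    ((j + 1 : Fin m) : ℕ) = ((j : ℕ) + 1) % m := by
  rw [Fin.add_def, fin_val_one hm]

lemma fin_step1 [NeZero m] (hm : 3 ≤ m) (j : Fin m) : j + 1 ≠ j := by
  intro h
  have h2 := congrArg Fin.val h
  rw [fin_val_add_one hm, fin_mod2 _ (by omega) (by omega)] at h2
  have := j.isLt
  split_ifs at h2 <;> omega

lemma fin_step2 [NeZero m] (hm : 3 ≤ m) (j : Fin m) : j + 1 + 1 ≠ j := by
  intro h
  have h2 := congrArg Fin.val h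
  rw [fin_val_add_one hm, fin_val_add_one hm,
    fin_mod2 ((j : ℕ) + 1) (by omega) (by omega)] at h2
  have := j.isLt
  split_ifs at h2 with h3
  · rw [fin_mod2 _ (by omega) (by omega)] at h2
    split_ifs at h2 <;> omega
  · rw [fin_mod2 _ (by omega) (by omega)] at h2
    split_ifs at h2 <;> omega

lemma fin_rc [NeZero m] {i j : Fin m} (h : i + 1 = j + 1) : i = j :=
  add_right_cancel h

lemma crown_rel_iff [NeZero m] (hm : 3 ≤ m) (i j : Fin m) :
    (i = j ∨ (i : ℕ) = ((j : ℕ) + 1) % m) ↔ (i = j ∨ i = j + 1) := by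
  have h := fin_val_add_one hm j
  constructor <;> (rintro (h1 | h1); · exact Or.inl h1)
  · exact Or.inr (Fin.ext (by rw [h, ← h1]))
  · exact Or.inr (by rw [h1, h])

end FinArith

section Crown
variable {L : Type*} [Lattice L] {m : ℕ} {x y : Fin m → L}

lemma IsCrown.rel' [NeZero m] (h : IsCrown x y) (i j : Fin m) :
    x i ≤ y j ↔ (i = j ∨ i = j + 1) := by
  rw [h.2.2.2.2.2.2.2, crown_rel_iff h.1]

lemma isCrown_of_rel' [NeZero m] (h3 : 3 ≤ m) (hxinj : Function.Injective x)
    (hyinj : Function.Injective y) (hxy : ∀ i j, x i ≠ y j)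
    (hxx : ∀ i j, x i ≤ x j → i = j) (hyy : ∀ i j, y i ≤ y j → i = j)
    (hyx : ∀ i j, ¬ y i ≤ x j)
    (hrel : ∀ i j, x i ≤ y j ↔ (i = j ∨ i = j + 1)) : IsCrown x y :=
  ⟨h3, hxinj, hyinj, hxy, hxx, hyy, hyx, fun i j => by
    rw [hrel, crown_rel_iff h3]⟩


lemma crown_replace_x (hc : IsCrown x y) {A : Set L} (hA : IsSublattice A)
    (i : Fin m) (hxiA : x i ∉ A) (hxA : ∀ j, j ≠ i → x j ∈ A) (hyA : ∀ j, y j ∈ A) :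
    ∃ x' y' : Fin m → L, IsCrown x' y' ∧ (∀ j, x' j ∈ A) ∧ (∀ j, y' j ∈ A) := by
  have h3 := hc.1
  haveI : NeZero m := ⟨by omega⟩
  have hrel := hc.rel'
  obtain ⟨-, hxinj, hyinj, hxy, hxx, hyy, hyx, -⟩ := hc
  obtain ⟨j₀, hji⟩ : ∃ j₀ : Fin m, j₀ + 1 = i := ⟨i - 1, sub_add_cancel i 1⟩
  set z := y i ⊓ y j₀ with hz
  have hz_yi : z ≤ y i := inf_le_left
  have hz_yj : z ≤ y j₀ := inf_le_right
  have hxz : x i ≤ z := le_inf ((hrel i i).2 (Or.inl rfl)) ((hrel i j₀).2 (Or.inr hji.symm))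
  have hzA : z ∈ A := hA.infClosed (hyA i) (hyA j₀)
  have key_ne : ∀ v : Fin m, z ≠ x v := by
    intro v hv
    by_cases hvi : v = i
    · rw [hvi] at hv; exact hxiA (hv ▸ hzA)
    · have h1 : x v ≤ y i := hv ▸ hz_yi
      have h2 : x v ≤ y j₀ := hv ▸ hz_yj
      rcases (hrel v i).1 h1 with hv1 | hv1
      · exact hvi hv1
      · rcases (hrel v j₀).1 h2 with hv2 | hv2
        · have hj : j₀ = i + 1 := hv2.symm.trans hv1
          exact fin_step2 h3 i (by rw [← hj]; exact hji)
        · exact fin_step1 h3 i (hv1.symm.trans (hv2.trans hji))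
  have key_ney : ∀ v : Fin m, z ≠ y v := by
    intro v hv
    have h1 : v = i := hyy _ _ (hv ▸ hz_yi)
    have h2 : v = j₀ := hyy _ _ (hv ▸ hz_yj)
    exact fin_step1 h3 j₀ (by rw [hji, ← h1, h2])
  have hvali : Function.update x i z i = z := Function.update_self i z x
  have hval : ∀ j, j ≠ i → Function.update x i z j = x j := fun j hj =>
    Function.update_of_ne hj _ _
  refine ⟨Function.update x i z, y, ?_, ?_, hyA⟩
  swap
  · intro j
    by_cases hj : j = i
    · rw [hj, hvali]; exact hzA
    · rw [hval j hj]; exact hxA j hj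
  apply isCrown_of_rel' h3
  · intro u v huv
    by_cases hu : u = i <;> by_cases hv : v = i
    · rw [hu, hv]
    · rw [hu, hvali, hval v hv] at huv; exact absurd huv (key_ne v)
    · rw [hv, hvali, hval u hu] at huv; exact absurd huv.symm (key_ne u)
    · rw [hval u hu, hval v hv] at huv; exact hxinj huv
  · exact hyinj
  · intro u j
    by_cases hu : u = i
    · rw [hu, hvali]; exact key_ney j
    · rw [hval u hu]; exact hxy u j
  · intro u v huv
    by_cases hu : u = i <;> by_cases hv : v = i
    · rw [hu, hv]
    · rw [hu, hvali, hval v hv] at huv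
      exact hu.trans (hxx i v (le_trans hxz huv))
    · rw [hv, hvali, hval u hu] at huv
      rcases (hrel u i).1 (le_trans huv hz_yi) with h1 | h1
      · exact h1.trans hv.symm
      · rcases (hrel u j₀).1 (le_trans huv hz_yj) with h2 | h2
        · have hj : j₀ = i + 1 := h2.symm.trans h1
          exact absurd (by rw [← hj]; exact hji) (fin_step2 h3 i)
        · exact absurd (h2.trans hji) hu
    · rw [hval u hu, hval v hv] at huv; exact hxx u v huv
  · exact hyy
  · intro j v hjv
    by_cases hv : v = i
    · rw [hv, hvali] at hjv
      have h1 : j = i := hyy j i (le_trans hjv hz_yi)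
      have h2 : j = j₀ := hyy j j₀ (le_trans hjv hz_yj)
      exact fin_step1 h3 j₀ (by rw [hji, ← h1, h2])
    · rw [hval v hv] at hjv; exact hyx j v hjv
  · intro u j
    by_cases hu : u = i
    · rw [hu, hvali]
      constructor
      · intro hzy
        exact (hrel i j).1 (le_trans hxz hzy)
      · rintro (hj | hj)
        · rw [← hj]; exact hz_yi
        · have hjj : j = j₀ := (fin_rc (hji.trans hj)).symm
          rw [hjj]; exact hz_yj
    · rw [hval u hu]; exact hrel u j

lemma crown_replace_y (hc : IsCrown x y) {A : Set L} (hA : IsSublattice A)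
    (i : Fin m) (hyiA : y i ∉ A) (hyA : ∀ j, j ≠ i → y j ∈ A) (hxA : ∀ j, x j ∈ A) :
    ∃ x' y' : Fin m → L, IsCrown x' y' ∧ (∀ j, x' j ∈ A) ∧ (∀ j, y' j ∈ A) := by
  have h3 := hc.1
  haveI : NeZero m := ⟨by omega⟩
  have hrel := hc.rel'
  obtain ⟨-, hxinj, hyinj, hxy, hxx, hyy, hyx, -⟩ := hc
  set z := x i ⊔ x (i + 1) with hz
  have hxz : x i ≤ z := le_sup_left
  have hx1z : x (i + 1) ≤ z := le_sup_right
  have hzy : z ≤ y i := sup_le ((hrel i i).2 (Or.inl rfl)) ((hrel (i+1) i).2 (Or.inr rfl))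
  have hzA : z ∈ A := hA.supClosed (hxA i) (hxA (i+1))
  have key_ne : ∀ v : Fin m, z ≠ y v := by
    intro v hv
    by_cases hvi : v = i
    · rw [hvi] at hv; exact hyiA (hv ▸ hzA)
    · have h1 : x i ≤ y v := hv ▸ hxz
      have h2 : x (i+1) ≤ y v := hv ▸ hx1z
      rcases (hrel i v).1 h1 with hv1 | hv1
      · exact hvi hv1.symm
      · rcases (hrel (i+1) v).1 h2 with h2' | h2'
        · exact fin_step2 h3 v ((congrArg (· + 1) hv1.symm).trans h2')
        · exact hvi (fin_rc h2').symm
  have key_nex : ∀ v : Fin m, z ≠ x v := by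
    intro v hv
    have h1 : i = v := hxx _ _ (hv ▸ hxz)
    have h2 : i + 1 = v := hxx _ _ (hv ▸ hx1z)
    exact fin_step1 h3 i (h2.trans h1.symm)
  have hvali : Function.update y i z i = z := Function.update_self i z y
  have hval : ∀ j, j ≠ i → Function.update y i z j = y j := fun j hj =>
    Function.update_of_ne hj _ _
  refine ⟨x, Function.update y i z, ?_, hxA, ?_⟩
  swap
  · intro j
    by_cases hj : j = i
    · rw [hj, hvali]; exact hzA
    · rw [hval j hj]; exact hyA j hj
  apply isCrown_of_rel' h3 hxinj
  · intro u v huv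
    by_cases hu : u = i <;> by_cases hv : v = i
    · rw [hu, hv]
    · rw [hu, hvali, hval v hv] at huv; exact absurd huv (key_ne v)
    · rw [hv, hvali, hval u hu] at huv; exact absurd huv.symm (key_ne u)
    · rw [hval u hu, hval v hv] at huv; exact hyinj huv
  · intro j v
    by_cases hv : v = i
    · rw [hv, hvali]; intro hh; exact key_nex j hh.symm
    · rw [hval v hv]; exact hxy j v
  · exact hxx
  · intro u v huv
    by_cases hu : u = i <;> by_cases hv : v = i
    · rw [hu, hv]
    · rw [hu, hvali, hval v hv] at huv
      rcases (hrel i v).1 (le_trans hxz huv) with h1 | h1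
      · exact hu.trans h1
      · rcases (hrel (i+1) v).1 (le_trans hx1z huv) with h2 | h2
        · exact absurd ((congrArg (· + 1) h1.symm).trans h2) (fin_step2 h3 v)
        · exact hu.trans (fin_rc h2)
    · rw [hv, hvali, hval u hu] at huv
      exact (hyy u i (le_trans huv hzy)).trans hv.symm
    · rw [hval u hu, hval v hv] at huv; exact hyy u v huv
  · intro v j hvj
    by_cases hv : v = i
    · rw [hv, hvali] at hvj
      have h1 : i = j := hxx i j (le_trans hxz hvj)
      have h2 : i + 1 = j := hxx (i+1) j (le_trans hx1z hvj)
      exact fin_step1 h3 i (h2.trans h1.symm)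
    · rw [hval v hv] at hvj; exact hyx v j hvj
  · intro j v
    by_cases hv : v = i
    · rw [hv, hvali]
      constructor
      · intro hjz
        exact (hrel j i).1 (le_trans hjz hzy)
      · rintro (hj | hj)
        · rw [hj]; exact hxz
        · rw [hj]; exact hx1z
    · rw [hval v hv]; exact hrel j v

lemma crown_step (hc : IsCrown x y) {A B : Set L} (hA : IsSublattice A)
    (a : L) (ha : ∀ b ∈ B, b ≠ a → b ∈ A)
    (hxB : ∀ i, x i ∈ B) (hyB : ∀ i, y i ∈ B) :
    ∃ x' y' : Fin m → L, IsCrown x' y' ∧ (∀ i, x' i ∈ A) ∧ (∀ i, y' i ∈ A) := by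
  by_cases haA : a ∈ A
  · refine ⟨x, y, hc, fun i => ?_, fun i => ?_⟩
    · rcases eq_or_ne (x i) a with h | h
      · rwa [h]
      · exact ha _ (hxB i) h
    · rcases eq_or_ne (y i) a with h | h
      · rwa [h]
      · exact ha _ (hyB i) h
  · by_cases hax : ∃ i, x i = a
    · obtain ⟨i, hi⟩ := hax
      refine crown_replace_x hc hA i (hi ▸ haA) (fun j hj => ?_) (fun j => ?_)
      · exact ha _ (hxB j) (fun h => hj (hc.2.1 (h.trans hi.symm)))
      · exact ha _ (hyB j) (fun h => hc.2.2.2.1 i j (hi.trans h.symm))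
    · by_cases hay : ∃ i, y i = a
      · obtain ⟨i, hi⟩ := hay
        refine crown_replace_y hc hA i (hi ▸ haA) (fun j hj => ?_) (fun j => ?_)
        · exact ha _ (hyB j) (fun h => hj (hc.2.2.1 (h.trans hi.symm)))
        · exact ha _ (hxB j) (fun h => hax ⟨j, h⟩)
      · push_neg at hax hay
        exact ⟨x, y, hc, fun i => ha _ (hxB i) (hax i), fun i => ha _ (hyB i) (hay i)⟩

theorem not_dismantlable_of_crown [Finite L] (hc : IsCrown x y) : ¬ Dismantlable L := by
  rintro ⟨c, h1, h2, h3⟩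
  have hm3 := hc.1
  haveI : NeZero m := ⟨by omega⟩
  haveI : Nonempty L := ⟨x 0⟩
  set N := Nat.card L with hN
  have hN1 : 1 ≤ N := Nat.card_pos
  have key : ∀ d, d ≤ N - 1 →
      ∃ x' y' : Fin m → L, IsCrown x' y' ∧ (∀ i, x' i ∈ c (N - d)) ∧ (∀ i, y' i ∈ c (N - d)) := by
    intro d
    induction d with
    | zero =>
      intro _
      refine ⟨x, y, hc, fun i => ?_, fun i => ?_⟩ <;>
        · show _ ∈ c (N - 0)
          rw [Nat.sub_zero, h3]; trivial
    | succ e ih =>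
      intro hle
      obtain ⟨x', y', hc', hx', hy'⟩ := ih (by omega)
      have hk : N - (e + 1) + 1 = N - e := by omega
      have h1k : 1 ≤ N - (e + 1) := by omega
      have hAsub : IsSublattice (c (N - (e + 1))) := (h1 _ h1k (by omega)).1
      have hAB : c (N - (e + 1)) ⊆ c (N - e) := by
        have := h2 (N - (e + 1)) h1k (by omega)
        rwa [hk] at this
      have hcB : Nat.card (c (N - e)) = N - e := (h1 _ (by omega) (by omega)).2
      have hcA : Nat.card (c (N - (e + 1))) = N - (e + 1) := (h1 _ h1k (by omega)).2
      rw [Nat.card_coe_set_eq] at hcB hcA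
      have hdiff : ∃ a, ∀ b ∈ c (N - e), b ≠ a → b ∈ c (N - (e + 1)) := by
        have hone : (c (N - e) \ c (N - (e + 1))).ncard = 1 := by
          rw [Set.ncard_diff hAB (Set.toFinite _), hcB, hcA]; omega
        obtain ⟨a, ha⟩ := Set.ncard_eq_one.1 hone
        refine ⟨a, fun b hb hba => ?_⟩
        by_contra hbA
        have : b ∈ c (N - e) \ c (N - (e + 1)) := ⟨hb, hbA⟩
        rw [ha] at this
        exact hba this
      obtain ⟨a, ha⟩ := hdiff
      exact crown_step hc' hAsub a ha hx' hy'
  obtain ⟨x', y', hc', hx', -⟩ := key (N - 1) le_rfl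
  have h11 : N - (N - 1) = 1 := by omega
  rw [h11] at hx'
  have hcard1 : (c 1).ncard = 1 := by
    rw [← Nat.card_coe_set_eq]; exact (h1 1 le_rfl hN1).2
  obtain ⟨a, ha⟩ := Set.ncard_eq_one.1 hcard1
  have h0 : x' 0 = a := by have := hx' 0; rw [ha] at this; exact this
  have h1' : x' 1 = a := by have := hx' 1; rw [ha] at this; exact this
  have h01 : (0 : Fin m) = 1 := hc'.2.1 (h0.trans h1'.symm)
  have hv := congrArg Fin.val h01
  rw [fin_val_one hc'.1, Fin.val_zero] at hv
  exact absurd hv (by omega)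

end Crown

/-! ### Crown in the subgroup lattice of `A n`, `n ≥ 5` -/

section CrownAn
open Equiv Equiv.Perm Subgroup

variable {n : ℕ}

def pt0 (hn : 5 ≤ n) : Fin n := ⟨0, by omega⟩
def pt1 (hn : 5 ≤ n) : Fin n := ⟨1, by omega⟩
def ptQ (hn : 5 ≤ n) (i : Fin 3) : Fin n := ⟨(i : ℕ) + 2, by omega⟩

lemma ptQ_ne_pt0 (hn : 5 ≤ n) (i : Fin 3) : ptQ hn i ≠ pt0 hn := by
  simp only [ptQ, pt0, ne_eq, Fin.mk.injEq]; omega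

lemma ptQ_ne_pt1 (hn : 5 ≤ n) (i : Fin 3) : ptQ hn i ≠ pt1 hn := by
  simp only [ptQ, pt1, ne_eq, Fin.mk.injEq]; omega

lemma pt0_ne_pt1 (hn : 5 ≤ n) : pt0 hn ≠ pt1 hn := by
  simp only [pt0, pt1, ne_eq, Fin.mk.injEq]; omega

lemma ptQ_inj (hn : 5 ≤ n) {i j : Fin 3} (h : ptQ hn i = ptQ hn j) : i = j := by
  simp only [ptQ, Fin.mk.injEq] at h
  exact Fin.ext (by omega)

def cyc (hn : 5 ≤ n) (i : Fin 3) : Perm (Fin n) :=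
  Equiv.swap (pt0 hn) (ptQ hn i) * Equiv.swap (pt0 hn) (pt1 hn)

lemma cyc_sign (hn : 5 ≤ n) (i : Fin 3) : Perm.sign (cyc hn i) = 1 := by
  rw [cyc, map_mul, Equiv.Perm.sign_swap (Ne.symm (ptQ_ne_pt0 hn i)),
    Equiv.Perm.sign_swap (pt0_ne_pt1 hn)]
  norm_num

lemma cyc_fix (hn : 5 ≤ n) (i : Fin 3) (w : Fin n) (h0 : w ≠ pt0 hn) (h1 : w ≠ pt1 hn)
    (hq : w ≠ ptQ hn i) : cyc hn i w = w := by
  rw [cyc, Equiv.Perm.mul_apply, Equiv.swap_apply_of_ne_of_ne h0 h1,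
    Equiv.swap_apply_of_ne_of_ne h0 hq]

lemma cyc_moves (hn : 5 ≤ n) (i : Fin 3) : cyc hn i (ptQ hn i) = pt0 hn := by
  rw [cyc, Equiv.Perm.mul_apply,
    Equiv.swap_apply_of_ne_of_ne (ptQ_ne_pt0 hn i) (ptQ_ne_pt1 hn i),
    Equiv.swap_apply_right]

def tg (hn : 5 ≤ n) (i : Fin 3) : alternatingGroup (Fin n) :=
  ⟨cyc hn i, mem_alternatingGroup.2 (cyc_sign hn i)⟩

/-- stabilizer of a point, as a subgroup of the alternating group -/
def stab (hn : 5 ≤ n) (w : Fin n) : Subgroup (alternatingGroup (Fin n)) where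
  carrier := {g | (g : Perm (Fin n)) w = w}
  one_mem' := rfl
  mul_mem' := by
    intro a b ha hb
    have : ((a * b : alternatingGroup (Fin n)) : Perm (Fin n)) w
        = (a : Perm (Fin n)) ((b : Perm (Fin n)) w) := rfl
    simp only [Set.mem_setOf_eq] at ha hb ⊢
    rw [this, hb, ha]
  inv_mem' := by
    intro a ha
    simp only [Set.mem_setOf_eq] at ha ⊢
    conv_lhs => rw [← ha]
    exact Equiv.symm_apply_apply _ _

lemma mem_stab (hn : 5 ≤ n) (w : Fin n) (g : alternatingGroup (Fin n)) :
    g ∈ stab hn w ↔ (g : Perm (Fin n)) w = w := Iff.rfl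

def xg (hn : 5 ≤ n) (i : Fin 3) : Subgroup (alternatingGroup (Fin n)) :=
  Subgroup.closure {tg hn i}

def yg (hn : 5 ≤ n) (i : Fin 3) : Subgroup (alternatingGroup (Fin n)) :=
  Subgroup.closure {tg hn i, tg hn (i + 1)}

lemma tg_mem_xg (hn : 5 ≤ n) (i : Fin 3) : tg hn i ∈ xg hn i :=
  Subgroup.subset_closure rfl

lemma tg_mem_yg (hn : 5 ≤ n) {a i : Fin 3} (h : a = i ∨ a = i + 1) : tg hn a ∈ yg hn i := by
  apply Subgroup.subset_closure
  rcases h with rfl | rfl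
  · exact Set.mem_insert _ _
  · exact Set.mem_insert_of_mem _ rfl

lemma xg_le_stab (hn : 5 ≤ n) {i : Fin 3} {w : Fin n} (h : cyc hn i w = w) :
    xg hn i ≤ stab hn w := by
  apply Subgroup.closure_le _ |>.2
  intro g hg
  rw [Set.mem_singleton_iff] at hg
  subst hg
  exact h

lemma yg_le_stab (hn : 5 ≤ n) {i : Fin 3} {w : Fin n} (h1 : cyc hn i w = w)
    (h2 : cyc hn (i + 1) w = w) : yg hn i ≤ stab hn w := by
  apply Subgroup.closure_le _ |>.2
  rintro g (rfl | hg)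
  · exact h1
  · rw [Set.mem_singleton_iff] at hg
    subst hg
    exact h2

lemma tg_not_mem_stabQ (hn : 5 ≤ n) (i : Fin 3) : tg hn i ∉ stab hn (ptQ hn i) := by
  rw [mem_stab]
  show ¬ cyc hn i (ptQ hn i) = ptQ hn i
  rw [cyc_moves hn i]
  exact fun h => ptQ_ne_pt0 hn i h.symm

lemma tg_not_mem_xg (hn : 5 ≤ n) {i j : Fin 3} (h : i ≠ j) : tg hn i ∉ xg hn j := by
  intro hmem
  have hfix : cyc hn j (ptQ hn i) = ptQ hn i :=
    cyc_fix hn j _ (ptQ_ne_pt0 hn i) (ptQ_ne_pt1 hn i)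
      (fun hq => h (ptQ_inj hn hq))
  exact tg_not_mem_stabQ hn i (xg_le_stab hn hfix hmem)

lemma tg_not_mem_yg (hn : 5 ≤ n) {a i : Fin 3} (h1 : a ≠ i) (h2 : a ≠ i + 1) :
    tg hn a ∉ yg hn i := by
  intro hmem
  have hf1 : cyc hn i (ptQ hn a) = ptQ hn a :=
    cyc_fix hn i _ (ptQ_ne_pt0 hn a) (ptQ_ne_pt1 hn a) (fun hq => h1 (ptQ_inj hn hq))
  have hf2 : cyc hn (i + 1) (ptQ hn a) = ptQ hn a :=
    cyc_fix hn (i + 1) _ (ptQ_ne_pt0 hn a) (ptQ_ne_pt1 hn a) (fun hq => h2 (ptQ_inj hn hq))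
  exact tg_not_mem_stabQ hn a (yg_le_stab hn hf1 hf2 hmem)

lemma fin3_d1 : ∀ i j : Fin 3, i ≠ j → (j + 2 = i ∨ j + 2 = i + 1) := by decide
lemma fin3_d2 : ∀ j : Fin 3, j + 2 ≠ j := by decide
lemma fin3_d3 : ∀ j : Fin 3, j + 2 ≠ j + 1 := by decide
lemma fin3_d4 : ∀ i : Fin 3, i + 1 ≠ i := by decide

lemma crown_in_An (hn : 5 ≤ n) : IsCrown (xg hn) (yg hn) := by
  have hxx : ∀ i j : Fin 3, xg hn i ≤ xg hn j → i = j := by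
    intro i j hle
    by_contra h
    exact tg_not_mem_xg hn h (hle (tg_mem_xg hn i))
  have hyy : ∀ i j : Fin 3, yg hn i ≤ yg hn j → i = j := by
    intro i j hle
    by_contra h
    -- a := j + 2 is in {i, i+1} but not in {j, j+1}
    exact tg_not_mem_yg hn (fin3_d2 j) (fin3_d3 j)
      (hle (tg_mem_yg hn (fin3_d1 i j h)))
  have hrel : ∀ i j : Fin 3, xg hn i ≤ yg hn j ↔ (i = j ∨ i = j + 1) := by
    intro i j
    constructor
    · intro hle
      by_contra hcon
      push_neg at hcon
      exact tg_not_mem_yg hn hcon.1 hcon.2 (hle (tg_mem_xg hn i))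
    · intro h
      rw [xg]
      apply Subgroup.closure_le _ |>.2
      intro g hg
      rw [Set.mem_singleton_iff] at hg
      subst hg
      exact tg_mem_yg hn h
  have hyx : ∀ i j : Fin 3, ¬ yg hn i ≤ xg hn j := by
    intro i j hle
    rcases eq_or_ne i j with rfl | hij
    · exact tg_not_mem_xg hn (fin3_d4 i) (hle (tg_mem_yg hn (Or.inr rfl)))
    · exact tg_not_mem_xg hn hij (hle (tg_mem_yg hn (Or.inl rfl)))
  have hxy : ∀ i j : Fin 3, xg hn i ≠ yg hn j := by
    intro i j heq
    -- some a ∈ {j, j+1} with a ≠ i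
    rcases eq_or_ne i j with rfl | hij
    · exact tg_not_mem_xg hn (fin3_d4 i) (heq ▸ tg_mem_yg hn (Or.inr rfl))
    · exact tg_not_mem_xg hn (Ne.symm hij) (heq ▸ tg_mem_yg hn (Or.inl rfl))
  exact isCrown_of_rel' (by norm_num)
    (fun i j hij => hxx i j (le_of_eq hij))
    (fun i j hij => hyy i j (le_of_eq hij))
    hxy hxx hyy hyx hrel

theorem An_not_dismantlable (hn : 5 ≤ n) :
    ¬ Dismantlable (Subgroup (alternatingGroup (Fin n))) :=
  not_dismantlable_of_crown (crown_in_An hn)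

end CrownAn

/-! ### Small cases -/

section Small
open Equiv Equiv.Perm Subgroup

lemma dismantlable_of_card_one {L : Type*} [Lattice L] [Finite L]
    (h : Nat.card L = 1) : Dismantlable L := by
  refine ⟨fun _ => Set.univ, ?_, fun _ _ _ => subset_rfl, rfl⟩
  intro i h1 h2
  rw [h] at h2
  have : i = 1 := le_antisymm h2 h1
  subst this
  refine ⟨isSublattice_univ, ?_⟩
  rw [Nat.card_coe_set_eq, Set.ncard_univ, h]

lemma subgroup_card_one {G : Type*} [Group G] (h : ∀ g : G, g = 1) :
    Nat.card (Subgroup G) = 1 := by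
  rw [Nat.card_eq_one_iff_unique]
  refine ⟨⟨fun H K => ?_⟩, ⟨⊥⟩⟩
  ext g
  rw [h g]
  simp [one_mem]

namespace A3

abbrev G3 := alternatingGroup (Fin 3)

def t3 : G3 := ⟨Equiv.swap 0 2 * Equiv.swap 0 1, mem_alternatingGroup.2 (by decide)⟩

lemma hcardG3 : Fintype.card G3 = 3 := by
  have h : 2 * Fintype.card G3 = 6 := by
    have h2 := two_mul_card_alternatingGroup (α := Fin 3)
    rw [Fintype.card_perm, Fintype.card_fin] at h2
    exact h2
  omega

def A3u : Finset G3 := {1, t3, t3 * t3}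

lemma hA3card : A3u.card = 3 := by decide

lemma huniv : ∀ g : G3, g ∈ A3u :=
  Finset.eq_univ_iff_forall.1 (Finset.eq_univ_of_card _ (hA3card.trans hcardG3.symm))

lemma hclass : ∀ H : Subgroup G3, H = ⊥ ∨ H = ⊤ := by
  have hd : ∀ g ∈ A3u, g = 1 ∨ g = t3 ∨ g = t3 * t3 := by decide
  have hsq : (t3 * t3) * (t3 * t3) = t3 := by decide
  intro H
  by_cases ht : t3 ∈ H
  · right
    rw [Subgroup.eq_top_iff']
    intro g
    rcases hd g (huniv g) with rfl | rfl | rfl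
    · exact one_mem H
    · exact ht
    · exact mul_mem ht ht
  · left
    rw [eq_bot_iff]
    intro g hg
    rw [Subgroup.mem_bot]
    rcases hd g (huniv g) with rfl | rfl | rfl
    · rfl
    · exact absurd hg ht
    · exact absurd (hsq ▸ mul_mem hg hg) ht

lemma bot_ne_top : (⊥ : Subgroup G3) ≠ ⊤ := by
  intro h
  have h1 : t3 ∈ (⊤ : Subgroup G3) := trivial
  rw [← h, Subgroup.mem_bot] at h1
  exact absurd h1 (by decide)

lemma hcardL : Nat.card (Subgroup G3) = 2 := by
  rw [Nat.card_eq_two_iff]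
  refine ⟨⊥, ⊤, bot_ne_top, ?_⟩
  ext H
  simp only [Set.mem_insert_iff, Set.mem_singleton_iff, Set.mem_univ, iff_true]
  exact hclass H

lemma dismantlable : Dismantlable (Subgroup G3) := by
  refine ⟨fun i => if i ≤ 1 then {⊤} else Set.univ, ?_, ?_, ?_⟩
  · intro i h1 h2
    rw [hcardL] at h2
    interval_cases i
    · simp only [le_refl, if_pos]
      constructor
      · constructor
        · rintro a rfl b rfl; simp
        · rintro a rfl b rfl; simp
      · rw [Nat.card_coe_set_eq, Set.ncard_singleton]
    · simp only [if_neg (by omega : ¬ (2:ℕ) ≤ 1)]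
      refine ⟨isSublattice_univ, ?_⟩
      rw [Nat.card_coe_set_eq, Set.ncard_univ, hcardL]
  · intro i h1 h2 x hx
    simp only at hx ⊢
    by_cases hi : i ≤ 1
    · rw [if_neg (by omega : ¬ i + 1 ≤ 1)]; trivial
    · rw [if_neg (by omega : ¬ i + 1 ≤ 1)]; trivial
  · rw [hcardL]
    norm_num

end A3

end Small

lemma ncard_fin_lt (N i : ℕ) (h : i ≤ N) : ({k : Fin N | (k : ℕ) < i}).ncard = i := by
  rw [← Nat.card_coe_set_eq]
  have e : ↥{k : Fin N | (k : ℕ) < i} ≃ Fin i :=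
    { toFun := fun k => ⟨k.1, k.2⟩
      invFun := fun j => ⟨⟨j.1, lt_of_lt_of_le j.2 h⟩, j.2⟩
      left_inv := fun k => Subtype.ext (Fin.ext rfl)
      right_inv := fun j => rfl }
  exact Nat.card_eq_of_equiv_fin e

open Equiv Equiv.Perm Subgroup
set_option maxRecDepth 40000
set_option synthInstance.maxHeartbeats 2000000
set_option synthInstance.maxSize 2000
set_option maxHeartbeats 2000000
set_option maxRecDepth 40000
namespace A4
abbrev G := alternatingGroup (Fin 4)
def ea : G := ⟨Equiv.swap 0 1 * Equiv.swap 2 3, mem_alternatingGroup.2 (by decide)⟩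
def eb : G := ⟨Equiv.swap 0 2 * Equiv.swap 1 3, mem_alternatingGroup.2 (by decide)⟩
def ec : G := ⟨Equiv.swap 0 3 * Equiv.swap 1 2, mem_alternatingGroup.2 (by decide)⟩
def ep : G := ⟨Equiv.swap 0 2 * Equiv.swap 0 1, mem_alternatingGroup.2 (by decide)⟩
def eq4 : G := ⟨Equiv.swap 0 3 * Equiv.swap 0 1, mem_alternatingGroup.2 (by decide)⟩
def er : G := ⟨Equiv.swap 0 3 * Equiv.swap 0 2, mem_alternatingGroup.2 (by decide)⟩
def es : G := ⟨Equiv.swap 1 3 * Equiv.swap 1 2, mem_alternatingGroup.2 (by decide)⟩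
def invL : Finset G := {ea, eb, ec}
def cycL : Finset G := {ep, ep*ep, eq4, eq4*eq4, er, er*er, es, es*es}
def F : Fin 10 → Finset G :=
  ![{1, ea, eb, ec} ∪ cycL, {1}, {1, ea, eb, ec}, {1, ea}, {1, eb}, {1, ec},
    {1, ep, ep*ep}, {1, eq4, eq4*eq4}, {1, er, er*er}, {1, es, es*es}]
def supT : Fin 10 → Fin 10 → Fin 10 :=
  ![![0,0,0,0,0,0,0,0,0,0],
    ![0,1,2,3,4,5,6,7,8,9],
    ![0,2,2,2,2,2,0,0,0,0],
    ![0,3,2,3,2,2,0,0,0,0],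
    ![0,4,2,2,4,2,0,0,0,0],
    ![0,5,2,2,2,5,0,0,0,0],
    ![0,6,0,0,0,0,6,0,0,0],
    ![0,7,0,0,0,0,0,7,0,0],
    ![0,8,0,0,0,0,0,0,8,0],
    ![0,9,0,0,0,0,0,0,0,9]]
def infT : Fin 10 → Fin 10 → Fin 10 :=
  ![![0,1,2,3,4,5,6,7,8,9],
    ![1,1,1,1,1,1,1,1,1,1],
    ![2,1,2,3,4,5,1,1,1,1],
    ![3,1,3,3,1,1,1,1,1,1],
    ![4,1,4,1,4,1,1,1,1,1],
    ![5,1,5,1,1,5,1,1,1,1],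
    ![6,1,1,1,1,1,6,1,1,1],
    ![7,1,1,1,1,1,1,7,1,1],
    ![8,1,1,1,1,1,1,1,8,1],
    ![9,1,1,1,1,1,1,1,1,9]]
lemma hA12card : (F 0).card = 12 := by decide
lemma Fclosed : ∀ k : Fin 10, 1 ∈ F k ∧ (∀ a ∈ F k, ∀ b ∈ F k, a * b ∈ F k) ∧ (∀ a ∈ F k, a⁻¹ ∈ F k) := by decide
lemma hd1 : ∀ g ∈ F 0, g = 1 ∨ g ∈ invL ∨ g ∈ cycL := by decide
lemma hd2 : ∀ v ∈ invL, ∀ w ∈ invL, v ≠ w → (v * w ∈ invL ∧ ∀ u ∈ invL, u = v ∨ u = w ∨ u = v * w) := by decide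
lemma hd3 : ∀ t ∈ cycL, ∀ u ∈ cycL, u ≠ t → u ≠ t*t → (t*u ∈ invL ∨ t*(u*u) ∈ invL) := by decide
lemma hd4 : ∀ t ∈ cycL, ∀ v ∈ invL, ∀ w ∈ invL, w = v ∨ w = t*v*t⁻¹ ∨ w = t*(t*v*t⁻¹)*t⁻¹ := by decide
lemma hd5 : ∀ t ∈ cycL, ∀ g ∈ F 0, (g ∈ F 2) ∨ (∃ w ∈ F 2, g = w * t) ∨ (∃ w ∈ F 2, g = w * (t*t)) := by decide
lemma hd7 : ∀ t ∈ cycL, ∃ k : Fin 10, F k = {1, t, t*t} := by decide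
lemma hd7b : ∀ v ∈ invL, ∃ k : Fin 10, F k = {1, v} := by decide
lemma hdV : ∀ v ∈ invL, ∀ w ∈ invL, v ≠ w → F 2 = {1, v, w, v*w} := by decide
lemma hF2inv : ∀ w ∈ F 2, w = 1 ∨ w ∈ invL := by decide
lemma Finj : ∀ k l : Fin 10, F k = F l → k = l := by decide
lemma hsup_ub : ∀ k l : Fin 10, (∀ g ∈ F k, g ∈ F (supT k l)) ∧ (∀ g ∈ F l, g ∈ F (supT k l)) := by decide
lemma hinf_lb : ∀ k l : Fin 10, (∀ g ∈ F (infT k l), g ∈ F k) ∧ (∀ g ∈ F (infT k l), g ∈ F l) := by decide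
lemma htbl : ∀ k l : Fin 10, ((supT k l : Fin 10) : ℕ) ≤ max (k:ℕ) (l:ℕ) ∧ ((infT k l : Fin 10) : ℕ) ≤ max (k:ℕ) (l:ℕ) := by decide
lemma hsup_uniq : ∀ k l j : Fin 10, (∀ g ∈ F k, g ∈ F j) → (∀ g ∈ F l, g ∈ F j) → (∀ g ∈ F j, g ∈ F (supT k l)) → j = supT k l := by decide
lemma hinf_uniq : ∀ k l j : Fin 10, (∀ g ∈ F j, g ∈ F k) → (∀ g ∈ F j, g ∈ F l) → (∀ g ∈ F (infT k l), g ∈ F j) → j = infT k l := by decide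

def Psi (k : Fin 10) : Subgroup G where
  carrier := ↑(F k)
  one_mem' := by
    rw [Finset.mem_coe]
    exact (Fclosed k).1
  mul_mem' := by
    intro a b ha hb
    rw [Finset.mem_coe] at *
    exact (Fclosed k).2.1 a ha b hb
  inv_mem' := by
    intro a ha
    rw [Finset.mem_coe] at *
    exact (Fclosed k).2.2 a ha

lemma mem_Psi (g : G) (k : Fin 10) : g ∈ Psi k ↔ g ∈ F k := Finset.mem_coe

lemma Psi_le {k l : Fin 10} : Psi k ≤ Psi l ↔ ∀ g ∈ F k, g ∈ F l := by
  constructor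
  · intro h g hg
    exact (mem_Psi g l).1 (h ((mem_Psi g k).2 hg))
  · intro h g hg
    exact (mem_Psi g l).2 (h g ((mem_Psi g k).1 hg))

lemma hcardG : Fintype.card G = 12 := by
  have h : 2 * Fintype.card G = 24 := by
    have h2 := two_mul_card_alternatingGroup (α := Fin 4)
    rw [Fintype.card_perm, Fintype.card_fin] at h2
    exact h2
  omega

lemma huniv : ∀ g : G, g ∈ F 0 :=
  Finset.eq_univ_iff_forall.1 (Finset.eq_univ_of_card _ (hA12card.trans hcardG.symm))

lemma Psi_surj : ∀ H : Subgroup G, ∃ k, H = Psi k := by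
  intro H
  by_cases hcycH : ∃ t ∈ cycL, t ∈ H
  · obtain ⟨t, htc, htH⟩ := hcycH
    by_cases hinvH : ∃ v ∈ invL, v ∈ H
    · obtain ⟨v, hvi, hvH⟩ := hinvH
      refine ⟨0, ?_⟩
      ext g
      rw [mem_Psi]
      refine ⟨fun _ => huniv g, fun _ => ?_⟩
      have hV : ∀ w ∈ invL, w ∈ H := by
        intro w hw
        rcases hd4 t htc v hvi w hw with rfl | rfl | rfl
        · exact hvH
        · exact mul_mem (mul_mem htH hvH) (inv_mem htH)
        · exact mul_mem (mul_mem htH (mul_mem (mul_mem htH hvH) (inv_mem htH))) (inv_mem htH)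
      have hV2 : ∀ w ∈ F 2, w ∈ H := by
        intro w hw
        rcases hF2inv w hw with rfl | hwi
        · exact one_mem H
        · exact hV w hwi
      rcases hd5 t htc g (huniv g) with hg | ⟨w, hw, rfl⟩ | ⟨w, hw, rfl⟩
      · exact hV2 _ hg
      · exact mul_mem (hV2 _ hw) htH
      · exact mul_mem (hV2 _ hw) (mul_mem htH htH)
    · obtain ⟨k, hk⟩ := hd7 t htc
      refine ⟨k, ?_⟩
      ext g
      rw [mem_Psi, hk]
      simp only [Finset.mem_insert, Finset.mem_singleton]
      constructor
      · intro hgH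
        rcases hd1 g (huniv g) with rfl | hgi | hgc
        · exact Or.inl rfl
        · exact absurd ⟨g, hgi, hgH⟩ hinvH
        · by_cases hgt : g = t
          · exact Or.inr (Or.inl hgt)
          by_cases hgt2 : g = t * t
          · exact Or.inr (Or.inr hgt2)
          rcases hd3 t htc g hgc hgt hgt2 with h | h
          · exact absurd ⟨t * g, h, mul_mem htH hgH⟩ hinvH
          · exact absurd ⟨t * (g * g), h, mul_mem htH (mul_mem hgH hgH)⟩ hinvH
      · rintro (rfl | rfl | rfl)
        · exact one_mem H
        · exact htH
        · exact mul_mem htH htH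
  · by_cases hinvH : ∃ v ∈ invL, v ∈ H
    · obtain ⟨v, hvi, hvH⟩ := hinvH
      by_cases h2 : ∃ w ∈ invL, w ≠ v ∧ w ∈ H
      · obtain ⟨w, hwi, hwv, hwH⟩ := h2
        refine ⟨2, ?_⟩
        ext g
        rw [mem_Psi, hdV v hvi w hwi (Ne.symm hwv)]
        simp only [Finset.mem_insert, Finset.mem_singleton]
        constructor
        · intro hgH
          rcases hd1 g (huniv g) with rfl | hgi | hgc
          · exact Or.inl rfl
          · rcases (hd2 v hvi w hwi (Ne.symm hwv)).2 g hgi with h | h | h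
            · exact Or.inr (Or.inl h)
            · exact Or.inr (Or.inr (Or.inl h))
            · exact Or.inr (Or.inr (Or.inr h))
          · exact absurd ⟨g, hgc, hgH⟩ hcycH
        · rintro (rfl | rfl | rfl | rfl)
          · exact one_mem H
          · exact hvH
          · exact hwH
          · exact mul_mem hvH hwH
      · obtain ⟨k, hk⟩ := hd7b v hvi
        refine ⟨k, ?_⟩
        ext g
        rw [mem_Psi, hk]
        simp only [Finset.mem_insert, Finset.mem_singleton]
        constructor
        · intro hgH
          rcases hd1 g (huniv g) with rfl | hgi | hgc
          · exact Or.inl rfl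
          · refine Or.inr ?_
            by_contra hgv
            exact h2 ⟨g, hgi, hgv, hgH⟩
          · exact absurd ⟨g, hgc, hgH⟩ hcycH
        · rintro (rfl | rfl)
          · exact one_mem H
          · exact hvH
    · refine ⟨1, ?_⟩
      ext g
      rw [mem_Psi]
      show g ∈ H ↔ g ∈ ({1} : Finset G)
      rw [Finset.mem_singleton]
      constructor
      · intro hgH
        rcases hd1 g (huniv g) with rfl | hgi | hgc
        · rfl
        · exact absurd ⟨g, hgi, hgH⟩ hinvH
        · exact absurd ⟨g, hgc, hgH⟩ hcycH
      · rintro rfl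
        exact one_mem H

lemma Psi_inj : Function.Injective Psi := by
  intro k l h
  apply Finj
  ext g
  rw [← mem_Psi, ← mem_Psi, h]

lemma hsup : ∀ k l : Fin 10, Psi k ⊔ Psi l = Psi (supT k l) := by
  intro k l
  obtain ⟨j, hj⟩ := Psi_surj (Psi k ⊔ Psi l)
  have h1 : ∀ g ∈ F k, g ∈ F j := by
    apply Psi_le.1
    rw [← hj]
    exact le_sup_left
  have h2 : ∀ g ∈ F l, g ∈ F j := by
    apply Psi_le.1
    rw [← hj]
    exact le_sup_right
  have h3 : ∀ g ∈ F j, g ∈ F (supT k l) := by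
    apply Psi_le.1
    rw [← hj]
    exact sup_le (Psi_le.2 (hsup_ub k l).1) (Psi_le.2 (hsup_ub k l).2)
  rw [hj, hsup_uniq k l j h1 h2 h3]

lemma hinf : ∀ k l : Fin 10, Psi k ⊓ Psi l = Psi (infT k l) := by
  intro k l
  obtain ⟨j, hj⟩ := Psi_surj (Psi k ⊓ Psi l)
  have h1 : ∀ g ∈ F j, g ∈ F k := by
    apply Psi_le.1
    rw [← hj]
    exact inf_le_left
  have h2 : ∀ g ∈ F j, g ∈ F l := by
    apply Psi_le.1
    rw [← hj]
    exact inf_le_right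
  have h3 : ∀ g ∈ F (infT k l), g ∈ F j := by
    apply Psi_le.1
    rw [← hj]
    exact le_inf (Psi_le.2 (hinf_lb k l).1) (Psi_le.2 (hinf_lb k l).2)
  rw [hj, hinf_uniq k l j h1 h2 h3]

lemma hcardL : Nat.card (Subgroup G) = 10 := by
  have hbij : Function.Bijective Psi :=
    ⟨Psi_inj, fun H => (Psi_surj H).imp fun k hk => hk.symm⟩
  rw [← Nat.card_congr (Equiv.ofBijective Psi hbij), Nat.card_eq_fintype_card,
    Fintype.card_fin]

lemma dismantlable : Dismantlable (Subgroup G) := by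
  refine ⟨fun i => Psi '' {k | (k : ℕ) < i}, ?_, ?_, ?_⟩
  · intro i hi1 hi10
    rw [hcardL] at hi10
    constructor
    · constructor
      · rintro a ⟨k, hk, rfl⟩ b ⟨l, hl, rfl⟩
        refine ⟨supT k l, ?_, (hsup k l).symm⟩
        have := (htbl k l).1
        simp only [Set.mem_setOf_eq] at *
        omega
      · rintro a ⟨k, hk, rfl⟩ b ⟨l, hl, rfl⟩
        refine ⟨infT k l, ?_, (hinf k l).symm⟩
        have := (htbl k l).2
        simp only [Set.mem_setOf_eq] at *
        omega
    · rw [Nat.card_coe_set_eq, Set.ncard_image_of_injective _ Psi_inj,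
        ncard_fin_lt 10 i hi10]
  · intro i hi1 hi10
    apply Set.image_mono
    intro k hk
    simp only [Set.mem_setOf_eq] at *
    omega
  · rw [hcardL]
    ext H
    simp only [Set.mem_image, Set.mem_setOf_eq, Set.mem_univ, iff_true]
    obtain ⟨k, hk⟩ := Psi_surj H
    exact ⟨k, k.isLt, hk.symm⟩

end A4

/-- The subgroup lattice of the alternating group `Aₙ` is dismantlable iff `n ≤ 4`. -/
theorem stmt7 (n : ℕ) :
    Dismantlable (Subgroup (alternatingGroup (Fin n))) ↔ n ≤ 4 := by
  constructor
  · intro h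
    by_contra hn
    push_neg at hn
    exact An_not_dismantlable (by omega) h
  · intro hn
    interval_cases n
    · exact dismantlable_of_card_one (subgroup_card_one (fun g => Subsingleton.elim g 1))
    · exact dismantlable_of_card_one (subgroup_card_one (fun g => Subsingleton.elim g 1))
    · exact dismantlable_of_card_one (subgroup_card_one
        (by decide : ∀ g : alternatingGroup (Fin 2), g = 1))
    · exact A3.dismantlable
    · exact A4.dismantlable
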